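/- For n even, H(x) = 0 if and only if there exists a non-crossing chord diagram C on n−2 points (labeled 3,…,n) such that: (i) for every chord θ_{ab} of C, x_{a−3} = x_{b−3}; and (ii) whenever a chord θ_{ab} surrounds another chord θ_{cd}, then x_{a−3} = x_{b−3} < x_{c−3} = x_{d−3}. Here H(x) = Σ_{a=0}^{n−3} x_a + 2·Σ_{a=0}^{n−4} Σ_{b=a+1}^{n−3} (−1)^{b−a}·min(x_a,…,x_b). -/

import Mathlib

/-- `wmin x a b` is the minimum `min(x_a, x_{a+1}, …, x_b)` of a window of consecutive
variables (as an infimum of the image of the finite nonempty interval). -/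
noncomputable def wmin (x : ℕ → ℝ) (a b : ℕ) : ℝ := sInf (x '' Set.Icc a b)

/-- The piecewise-linear function
`H(x) = Σ_{a=0}^{N-1} x_a + 2·Σ_{a=0}^{N-2} Σ_{b=a+1}^{N-1} (-1)^{b-a}·min(x_a,…,x_b)`,
where `N = n - 2` so that the variables are `x_0, …, x_{n-3}`. -/
noncomputable def Hfun (N : ℕ) (x : ℕ → ℝ) : ℝ :=
  (∑ a ∈ Finset.range N, x a) +
    2 * ∑ a ∈ Finset.range N, ∑ b ∈ Finset.Ico (a + 1) N, (-1 : ℝ) ^ (b - a) * wmin x a b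

/-- A non-crossing perfect matching (non-crossing chord diagram) of the `N` points
`0, 1, …, N-1` on a line: chords are ordered pairs `(a, b)` with `a < b < N`, every
point `i < N` is the endpoint of exactly one chord, and no two chords interleave
as `a < c < b < d`. -/
def IsNCMatchingN (N : ℕ) (M : Finset (ℕ × ℕ)) : Prop :=
  (∀ p ∈ M, p.1 < p.2 ∧ p.2 < N) ∧
  (∀ i < N, ∃! p : ℕ × ℕ, p ∈ M ∧ (p.1 = i ∨ p.2 = i)) ∧
  (∀ p ∈ M, ∀ q ∈ M, ¬(p.1 < q.1 ∧ q.1 < p.2 ∧ p.2 < q.2))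


lemma wmin_eq_min' (x : ℕ → ℝ) {a b : ℕ} (h : a ≤ b) :
    wmin x a b = ((Finset.Icc a b).image x).min'
      (Finset.Nonempty.image (by simp [h]) x) := by
  have : x '' Set.Icc a b = (((Finset.Icc a b).image x : Finset ℝ) : Set ℝ) := by
    simp [Finset.coe_image]
  rw [wmin, this, Finset.Nonempty.csInf_eq_min']

lemma wmin_le (x : ℕ → ℝ) {a b i : ℕ} (hai : a ≤ i) (hib : i ≤ b) :
    wmin x a b ≤ x i := by
  rw [wmin_eq_min' x (hai.trans hib)]
  exact Finset.min'_le _ _ (Finset.mem_image_of_mem x (by simp [hai, hib]))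

lemma le_wmin (x : ℕ → ℝ) {a b : ℕ} {c : ℝ} (h : a ≤ b)
    (hc : ∀ i, a ≤ i → i ≤ b → c ≤ x i) : c ≤ wmin x a b := by
  rw [wmin_eq_min' x h]
  apply Finset.le_min'
  intro y hy
  obtain ⟨i, hi, rfl⟩ := Finset.mem_image.1 hy
  simp only [Finset.mem_Icc] at hi
  exact hc i hi.1 hi.2

lemma wmin_exists (x : ℕ → ℝ) {a b : ℕ} (h : a ≤ b) :
    ∃ i, a ≤ i ∧ i ≤ b ∧ x i = wmin x a b := by
  rw [wmin_eq_min' x h]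
  have := Finset.min'_mem ((Finset.Icc a b).image x)
    (Finset.Nonempty.image (by simp [h]) x)
  obtain ⟨i, hi, hxi⟩ := Finset.mem_image.1 this
  simp only [Finset.mem_Icc] at hi
  exact ⟨i, hi.1, hi.2, hxi⟩

lemma wmin_eq_of (x : ℕ → ℝ) {a z b : ℕ} (haz : a ≤ z) (hzb : z ≤ b)
    (hm : ∀ i, a ≤ i → i ≤ b → x z ≤ x i) : wmin x a b = x z :=
  le_antisymm (wmin_le x haz hzb) (le_wmin x (haz.trans hzb) hm)

lemma wmin_shift (x : ℕ → ℝ) (c : ℝ) {a b : ℕ} (h : a ≤ b) :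
    wmin (fun i => x i + c) a b = wmin x a b + c := by
  apply le_antisymm
  · obtain ⟨i, hai, hib, hx⟩ := wmin_exists x h
    calc wmin (fun i => x i + c) a b ≤ x i + c := wmin_le _ hai hib
    _ = wmin x a b + c := by rw [hx]
  · obtain ⟨i, hai, hib, hx⟩ := wmin_exists (fun i => x i + c) h
    have : wmin x a b ≤ x i := wmin_le x hai hib
    simp only [← hx]
    linarith

lemma wmin_congr {x y : ℕ → ℝ} {a b : ℕ} (h : ∀ i, a ≤ i → i ≤ b → x i = y i) :
    wmin x a b = wmin y a b := by
  unfold wmin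
  congr 1
  apply Set.image_congr
  intro i hi; exact h i hi.1 hi.2

noncomputable def Gfun (x : ℕ → ℝ) (a b : ℕ) : ℝ :=
  (∑ i ∈ Finset.Ico a b, x i) +
    2 * ∑ i ∈ Finset.Ico a b, ∑ j ∈ Finset.Ico (i + 1) b, (-1 : ℝ) ^ (j - i) * wmin x i j

noncomputable def Kfun (a b : ℕ) : ℝ :=
  ((b - a : ℕ) : ℝ) + 2 * ∑ i ∈ Finset.Ico a b, ∑ j ∈ Finset.Ico (i + 1) b, (-1 : ℝ) ^ (j - i)

lemma neg_one_pow_sub {i j : ℕ} (h : i ≤ j) :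
    ((-1 : ℝ)) ^ (j - i) = (-1) ^ (j + i) := by
  have : j + i = (j - i) + 2 * i := by omega
  rw [this, pow_add, pow_mul, neg_one_sq, one_pow, mul_one]

lemma neg_one_sum_Ico {a b : ℕ} (h : a ≤ b) :
    ∑ j ∈ Finset.Ico a b, ((-1 : ℝ)) ^ j = ((-1) ^ a - (-1) ^ b) / 2 := by
  induction b, h using Nat.le_induction with
  | base => simp
  | succ b hb ih =>
    rw [Finset.sum_Ico_succ_top hb, ih, pow_succ]
    ring

lemma Kfun_closed {a b : ℕ} (h : a ≤ b) :
    Kfun a b = (1 - (-1 : ℝ) ^ (a + b)) / 2 := by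
  unfold Kfun
  have hsum : ∀ i ∈ Finset.Ico a b, (∑ j ∈ Finset.Ico (i + 1) b, ((-1 : ℝ)) ^ (j - i))
      = -1/2 - (-1 : ℝ) ^ b / 2 * (-1) ^ i := by
    intro i hi
    simp only [Finset.mem_Ico] at hi
    have h1 : ∀ j ∈ Finset.Ico (i+1) b, ((-1 : ℝ)) ^ (j - i) = (-1)^i * (-1)^j := by
      intro j hj
      simp only [Finset.mem_Ico] at hj
      rw [neg_one_pow_sub (by omega), pow_add]
      ring
    rw [Finset.sum_congr rfl h1, ← Finset.mul_sum, neg_one_sum_Ico (by omega : i + 1 ≤ b)]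
    have e1 : ((-1:ℝ))^i * (-1)^(i+1) = -1 := by
      rw [pow_succ, ← mul_assoc, ← pow_add, ← two_mul, pow_mul, neg_one_sq, one_pow, one_mul]
    have e2 : ((-1:ℝ))^i * (-1)^b = (-1)^(b+i) := by rw [pow_add]; ring
    have e5 : ((-1:ℝ))^(b+i) = (-1)^b * (-1)^i := by rw [pow_add]
    field_simp
    linear_combination e1 - e2 - e5
  rw [Finset.sum_congr rfl hsum, Finset.sum_sub_distrib, ← Finset.mul_sum,
    neg_one_sum_Ico h, Finset.sum_const, Nat.card_Ico, nsmul_eq_mul]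
  have e3 : ((-1:ℝ))^b * (-1)^a = (-1)^(a+b) := by rw [pow_add]; ring
  have e4 : ((-1:ℝ))^b * (-1)^b = 1 := by
    rw [← pow_add, ← two_mul, pow_mul, neg_one_sq, one_pow]
  linear_combination (-1/2 : ℝ) * e3 + (1/2 : ℝ) * e4

lemma neg_one_pow_even {a b : ℕ} (h : a ≤ b) (he : Even (b - a)) :
    ((-1 : ℝ)) ^ (a + b) = 1 := by
  have : a + b = (b - a) + 2 * a := by omega
  rw [this, pow_add, he.neg_one_pow, pow_mul, neg_one_sq, one_pow, one_mul]

lemma neg_one_pow_odd {a b : ℕ} (h : a ≤ b) (he : ¬ Even (b - a)) :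
    ((-1 : ℝ)) ^ (a + b) = -1 := by
  have : a + b = (b - a) + 2 * a := by omega
  rw [this, pow_add, (Nat.not_even_iff_odd.1 he).neg_one_pow, pow_mul, neg_one_sq, one_pow,
    mul_one]

lemma Kfun_even {a b : ℕ} (h : a ≤ b) (he : Even (b - a)) : Kfun a b = 0 := by
  rw [Kfun_closed h, neg_one_pow_even h he]; ring

lemma Kfun_odd {a b : ℕ} (h : a ≤ b) (he : ¬ Even (b - a)) : Kfun a b = 1 := by
  rw [Kfun_closed h, neg_one_pow_odd h he]; ring


lemma Gfun_congr {x y : ℕ → ℝ} {a b : ℕ} (h : ∀ i, a ≤ i → i < b → x i = y i) :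
    Gfun x a b = Gfun y a b := by
  unfold Gfun
  congr 1
  · apply Finset.sum_congr rfl
    intro i hi
    simp only [Finset.mem_Ico] at hi
    exact h i hi.1 hi.2
  · congr 1
    apply Finset.sum_congr rfl
    intro i hi
    apply Finset.sum_congr rfl
    intro j hj
    simp only [Finset.mem_Ico] at hi hj
    rw [wmin_congr (fun k hk1 hk2 => h k (le_trans hi.1 hk1) (lt_of_le_of_lt hk2 hj.2))]

lemma Gfun_shift (x : ℕ → ℝ) (c : ℝ) (a b : ℕ) :
    Gfun (fun i => x i + c) a b = Gfun x a b + c * Kfun a b := by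
  unfold Gfun Kfun
  rw [Finset.sum_add_distrib, Finset.sum_const, Nat.card_Ico, nsmul_eq_mul]
  have h2 : ∀ i ∈ Finset.Ico a b, ∀ j ∈ Finset.Ico (i+1) b,
      (-1 : ℝ) ^ (j - i) * wmin (fun k => x k + c) i j
      = (-1 : ℝ) ^ (j - i) * wmin x i j + c * ((-1 : ℝ) ^ (j - i)) := by
    intro i _ j hj
    simp only [Finset.mem_Ico] at hj
    rw [wmin_shift x c (by omega : i ≤ j)]
    ring
  have h3 : (∑ i ∈ Finset.Ico a b, ∑ j ∈ Finset.Ico (i + 1) b,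
      (-1 : ℝ) ^ (j - i) * wmin (fun k => x k + c) i j)
      = (∑ i ∈ Finset.Ico a b, ∑ j ∈ Finset.Ico (i + 1) b, (-1 : ℝ) ^ (j - i) * wmin x i j)
        + c * ∑ i ∈ Finset.Ico a b, ∑ j ∈ Finset.Ico (i + 1) b, (-1 : ℝ) ^ (j - i) := by
    rw [Finset.mul_sum, ← Finset.sum_add_distrib]
    apply Finset.sum_congr rfl
    intro i hi
    rw [Finset.mul_sum, ← Finset.sum_add_distrib]
    exact Finset.sum_congr rfl (fun j hj => h2 i hi j hj)
  rw [h3]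
  ring

lemma sum2_split {M : Type*} [AddCommMonoid M] (f : ℕ → ℕ → M) {a z b : ℕ}
    (haz : a ≤ z) (hzb : z < b) :
    ∑ i ∈ Finset.Ico a b, ∑ j ∈ Finset.Ico (i+1) b, f i j
    = ((∑ i ∈ Finset.Ico a z, ∑ j ∈ Finset.Ico (i+1) z, f i j)
      + ∑ i ∈ Finset.Ico (z+1) b, ∑ j ∈ Finset.Ico (i+1) b, f i j)
      + ((∑ i ∈ Finset.Ico a z, ∑ j ∈ Finset.Ico z b, f i j)
        + ∑ j ∈ Finset.Ico (z+1) b, f z j) := by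
  rw [← Finset.sum_Ico_consecutive _ haz (le_of_lt hzb)]
  rw [Finset.sum_eq_sum_Ico_succ_bot hzb]
  have hinner : ∀ i ∈ Finset.Ico a z, (∑ j ∈ Finset.Ico (i+1) b, f i j)
      = (∑ j ∈ Finset.Ico (i+1) z, f i j) + ∑ j ∈ Finset.Ico z b, f i j := by
    intro i hi
    simp only [Finset.mem_Ico] at hi
    rw [Finset.sum_Ico_consecutive _ (by omega : i + 1 ≤ z) (le_of_lt hzb)]
  rw [Finset.sum_congr rfl hinner, Finset.sum_add_distrib]
  abel

lemma Gfun_split (x : ℕ → ℝ) {a z b : ℕ} (haz : a ≤ z) (hzb : z < b)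
    (hmin : ∀ i, a ≤ i → i < b → x z ≤ x i) :
    Gfun x a b = Gfun x a z + Gfun x (z+1) b
      + x z * (Kfun a b - Kfun a z - Kfun (z+1) b) := by
  have hw : ∀ i j, a ≤ i → i ≤ z → z ≤ j → j < b → wmin x i j = x z := by
    intro i j hai hiz hzj hjb
    exact wmin_eq_of x hiz hzj (fun k hk1 hk2 => hmin k (by omega) (by omega))
  have hG := sum2_split (fun i j => (-1 : ℝ) ^ (j - i) * wmin x i j) haz hzb
  have hK := sum2_split (fun i j => ((-1 : ℝ)) ^ (j - i)) haz hzb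
  have hBr1 : (∑ i ∈ Finset.Ico a z, ∑ j ∈ Finset.Ico z b, (-1 : ℝ) ^ (j-i) * wmin x i j)
      = x z * ∑ i ∈ Finset.Ico a z, ∑ j ∈ Finset.Ico z b, ((-1 : ℝ)) ^ (j-i) := by
    rw [Finset.mul_sum]
    apply Finset.sum_congr rfl
    intro i hi
    rw [Finset.mul_sum]
    apply Finset.sum_congr rfl
    intro j hj
    simp only [Finset.mem_Ico] at hi hj
    rw [hw i j hi.1 (le_of_lt hi.2) hj.1 hj.2]
    ring
  have hBr2 : (∑ j ∈ Finset.Ico (z+1) b, (-1 : ℝ) ^ (j - z) * wmin x z j)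
      = x z * ∑ j ∈ Finset.Ico (z+1) b, ((-1 : ℝ)) ^ (j - z) := by
    rw [Finset.mul_sum]
    apply Finset.sum_congr rfl
    intro j hj
    simp only [Finset.mem_Ico] at hj
    rw [hw z j haz le_rfl (by omega) hj.2]
    ring
  have hS1 : (∑ i ∈ Finset.Ico a b, x i)
      = (∑ i ∈ Finset.Ico a z, x i) + (x z + ∑ i ∈ Finset.Ico (z+1) b, x i) := by
    rw [← Finset.sum_Ico_consecutive _ haz (le_of_lt hzb), Finset.sum_eq_sum_Ico_succ_bot hzb]
  have hcard : ((b - a : ℕ) : ℝ) = ((z - a : ℕ) : ℝ) + ((b - (z+1) : ℕ) : ℝ) + 1 := by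
    have : (b - a : ℕ) = (z - a : ℕ) + (b - (z+1) : ℕ) + 1 := by omega
    rw [this]; push_cast; ring
  unfold Gfun Kfun
  rw [hG, hK, hBr1, hBr2, hS1, hcard]
  ring

example : True := trivial

structure Good (x : ℕ → ℝ) (a b : ℕ) (M : Finset (ℕ × ℕ)) : Prop where
  bnd : ∀ p ∈ M, a ≤ p.1 ∧ p.1 < p.2 ∧ p.2 < b
  tot : ∀ i, a ≤ i → i < b → ∃! p : ℕ × ℕ, p ∈ M ∧ (p.1 = i ∨ p.2 = i)
  ncr : ∀ p ∈ M, ∀ q ∈ M, ¬(p.1 < q.1 ∧ q.1 < p.2 ∧ p.2 < q.2)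
  eqv : ∀ p ∈ M, x p.1 = x p.2
  nst : ∀ p ∈ M, ∀ q ∈ M, p.1 < q.1 → q.2 < p.2 → x p.1 < x q.1

structure GoodNear (x : ℕ → ℝ) (a b z : ℕ) (M : Finset (ℕ × ℕ)) : Prop where
  haz : a ≤ z
  hzb : z < b
  hmin : ∀ i, a ≤ i → i < b → x z ≤ x i
  bnd : ∀ p ∈ M, a ≤ p.1 ∧ p.1 < p.2 ∧ p.2 < b
  nez : ∀ p ∈ M, p.1 ≠ z ∧ p.2 ≠ z
  tot : ∀ i, a ≤ i → i < b → i ≠ z → ∃! p : ℕ × ℕ, p ∈ M ∧ (p.1 = i ∨ p.2 = i)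
  ncr : ∀ p ∈ M, ∀ q ∈ M, ¬(p.1 < q.1 ∧ q.1 < p.2 ∧ p.2 < q.2)
  eqv : ∀ p ∈ M, x p.1 = x p.2
  nst : ∀ p ∈ M, ∀ q ∈ M, p.1 < q.1 → q.2 < p.2 → x p.1 < x q.1
  nct : ∀ p ∈ M, ¬(p.1 < z ∧ z < p.2)
  xtr : ∀ p ∈ M, z < p.1 → x z < x p.1

lemma pair_card {p : ℕ × ℕ} (h : p.1 < p.2) : ({p.1, p.2} : Finset ℕ).card = 2 := by
  rw [Finset.card_insert_of_notMem (by simp [Nat.ne_of_lt h]), Finset.card_singleton]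

lemma cover_biUnion {a b : ℕ} {M : Finset (ℕ × ℕ)} {Q : ℕ → Prop} [DecidablePred Q]
    (hb : ∀ p ∈ M, a ≤ p.1 ∧ p.1 < p.2 ∧ p.2 < b)
    (ht : ∀ i, a ≤ i → i < b → ¬ Q i → ∃! p : ℕ × ℕ, p ∈ M ∧ (p.1 = i ∨ p.2 = i))
    (hq : ∀ p ∈ M, ¬ Q p.1 ∧ ¬ Q p.2)
    (hqr : ∀ i, Q i → a ≤ i ∧ i < b) :
    (Finset.Ico a b).filter (fun i => ¬ Q i) = M.biUnion (fun p => {p.1, p.2})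
    ∧ (M.biUnion (fun p => {p.1, p.2})).card = 2 * M.card := by
  classical
  constructor
  · ext i
    simp only [Finset.mem_filter, Finset.mem_Ico, Finset.mem_biUnion, Finset.mem_insert,
      Finset.mem_singleton]
    constructor
    · rintro ⟨⟨h1, h2⟩, h3⟩
      obtain ⟨p, ⟨hp, hpi⟩, _⟩ := ht i h1 h2 h3
      exact ⟨p, hp, by tauto⟩
    · rintro ⟨p, hp, hi⟩
      have hbp := hb p hp
      have hqp := hq p hp
      rcases hi with rfl | rfl
      · exact ⟨⟨hbp.1, by omega⟩, hqp.1⟩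
      · exact ⟨⟨by omega, hbp.2.2⟩, hqp.2⟩
  · rw [Finset.card_biUnion, Finset.sum_congr rfl (fun p hp => pair_card (hb p hp).2.1),
      Finset.sum_const, smul_eq_mul, mul_comm]
    intro p hp q hq' hpq
    rw [Function.onFun, Finset.disjoint_left]
    intro i hip hiq
    simp only [Finset.mem_insert, Finset.mem_singleton] at hip hiq
    have hbp := hb p hp
    have hbq := hb q hq'
    have hia : a ≤ i ∧ i < b := by rcases hip with rfl | rfl <;> omega
    have hnq : ¬ Q i := by
      rcases hip with rfl | rfl
      · exact (hq p hp).1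
      · exact (hq p hp).2
    obtain ⟨u, _, huniq⟩ := ht i hia.1 hia.2 hnq
    exact hpq ((huniq p ⟨hp, by tauto⟩).trans (huniq q ⟨hq', by tauto⟩).symm)

lemma Good.even {x a b M} (h : Good x a b M) : b - a = 2 * M.card := by
  classical
  obtain ⟨hcov, hcard⟩ := cover_biUnion (Q := fun _ => False) h.bnd
    (fun i h1 h2 _ => h.tot i h1 h2) (fun p _ => ⟨not_false, not_false⟩)
    (fun i hi => hi.elim)
  rw [Finset.filter_true_of_mem (fun i _ => not_false)] at hcov
  rw [← Nat.card_Ico a b, hcov, hcard]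

lemma GoodNear.odd {x a b z M} (h : GoodNear x a b z M) : b - a = 2 * M.card + 1 := by
  classical
  obtain ⟨hcov, hcard⟩ := cover_biUnion (Q := fun i => i = z) h.bnd
    (fun i h1 h2 h3 => h.tot i h1 h2 h3)
    (fun p hp => ⟨(h.nez p hp).1, (h.nez p hp).2⟩)
    (fun i hi => by subst hi; exact ⟨h.haz, h.hzb⟩)
  have hz : z ∈ Finset.Ico a b := Finset.mem_Ico.2 ⟨h.haz, h.hzb⟩
  have : Finset.Ico a b = insert z ((Finset.Ico a b).filter (fun i => ¬ i = z)) := by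
    ext i
    simp only [Finset.mem_insert, Finset.mem_filter]
    constructor
    · intro hi
      by_cases hiz : i = z
      · exact Or.inl hiz
      · exact Or.inr ⟨hi, hiz⟩
    · rintro (rfl | ⟨hi, _⟩)
      · exact hz
      · exact hi
  have hcardIco : (Finset.Ico a b).card = 1 + 2 * M.card := by
    rw [this, Finset.card_insert_of_notMem (by simp), hcov, hcard]
    omega
  rw [← Nat.card_Ico a b, hcardIco]; omega

example : True := trivial

lemma combine_near {x : ℕ → ℝ} {a z b : ℕ} {M1 M2 : Finset (ℕ × ℕ)}
    (haz : a ≤ z) (hzb : z < b)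
    (h1 : Good x a z M1) (h2 : Good x (z+1) b M2)
    (hmin : ∀ i, a ≤ i → i < b → x z ≤ x i)
    (hright : ∀ i, z < i → i < b → x z < x i) :
    GoodNear x a b z (M1 ∪ M2) := by
  have m1 : ∀ p ∈ M1, a ≤ p.1 ∧ p.1 < p.2 ∧ p.2 < z := h1.bnd
  have m2 : ∀ p ∈ M2, z + 1 ≤ p.1 ∧ p.1 < p.2 ∧ p.2 < b := h2.bnd
  constructor
  · exact haz
  · exact hzb
  · exact hmin
  · intro p hp
    rcases Finset.mem_union.1 hp with h | h
    · have := m1 p h; omega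
    · have := m2 p h; omega
  · intro p hp
    rcases Finset.mem_union.1 hp with h | h
    · have := m1 p h; omega
    · have := m2 p h; omega
  · intro i hai hib hiz
    rcases Nat.lt_or_ge i z with hlt | hge
    · obtain ⟨p, ⟨hp, hpi⟩, huniq⟩ := h1.tot i hai hlt
      refine ⟨p, ⟨Finset.mem_union_left _ hp, hpi⟩, ?_⟩
      rintro q ⟨hq, hqi⟩
      rcases Finset.mem_union.1 hq with h | h
      · exact huniq q ⟨h, hqi⟩
      · have := m2 q h; omega
    · have hgt : z < i := by omega
      obtain ⟨p, ⟨hp, hpi⟩, huniq⟩ := h2.tot i (by omega) hib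
      refine ⟨p, ⟨Finset.mem_union_right _ hp, hpi⟩, ?_⟩
      rintro q ⟨hq, hqi⟩
      rcases Finset.mem_union.1 hq with h | h
      · have := m1 q h; omega
      · exact huniq q ⟨h, hqi⟩
  · intro p hp q hq
    rcases Finset.mem_union.1 hp with h | h <;> rcases Finset.mem_union.1 hq with h' | h'
    · exact h1.ncr p h q h'
    · have := m1 p h; have := m2 q h'; omega
    · have := m2 p h; have := m1 q h'; omega
    · exact h2.ncr p h q h'
  · intro p hp
    rcases Finset.mem_union.1 hp with h | h
    · exact h1.eqv p h
    · exact h2.eqv p h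
  · intro p hp q hq hpq1 hpq2
    rcases Finset.mem_union.1 hp with h | h <;> rcases Finset.mem_union.1 hq with h' | h'
    · exact h1.nst p h q h' hpq1 hpq2
    · have := m1 p h; have := m2 q h'; omega
    · have := m2 p h; have := m1 q h'; omega
    · exact h2.nst p h q h' hpq1 hpq2
  · intro p hp
    rcases Finset.mem_union.1 hp with h | h
    · have := m1 p h; omega
    · have := m2 p h; omega
  · intro p hp hzp
    rcases Finset.mem_union.1 hp with h | h
    · have := m1 p h; omega
    · have := m2 p h; exact hright p.1 hzp (by omega)

lemma combine_full {x : ℕ → ℝ} {a z b w : ℕ} {M1 M2 : Finset (ℕ × ℕ)}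
    (hzb : z < b)
    (hN : GoodNear x a z w M1) (h2 : Good x (z+1) b M2)
    (hwz : x w = x z) :
    Good x a b (insert (w, z) (M1 ∪ M2)) := by
  classical
  have m1 : ∀ p ∈ M1, a ≤ p.1 ∧ p.1 < p.2 ∧ p.2 < z := hN.bnd
  have m2 : ∀ p ∈ M2, z + 1 ≤ p.1 ∧ p.1 < p.2 ∧ p.2 < b := h2.bnd
  have haw : a ≤ w := hN.haz
  have hwz' : w < z := hN.hzb
  have hmem : ∀ p, p ∈ insert (w, z) (M1 ∪ M2) ↔ p = (w, z) ∨ p ∈ M1 ∨ p ∈ M2 := by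
    intro p
    simp [Finset.mem_insert, Finset.mem_union]
  constructor
  · intro p hp
    rcases (hmem p).1 hp with rfl | h | h
    · simp; omega
    · have := m1 p h; omega
    · have := m2 p h; omega
  · intro i hai hib
    by_cases hiw : i = w
    · subst hiw
      refine ⟨(i, z), ⟨Finset.mem_insert_self _ _, Or.inl rfl⟩, ?_⟩
      rintro q ⟨hq, hqi⟩
      rcases (hmem q).1 hq with rfl | h | h
      · rfl
      · have := hN.nez q h; have := m1 q h; exfalso
        rcases hqi with h' | h' <;> simp_all
      · have := m2 q h; omega
    · by_cases hiz : i = z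
      · subst hiz
        refine ⟨(w, i), ⟨Finset.mem_insert_self _ _, Or.inr rfl⟩, ?_⟩
        rintro q ⟨hq, hqi⟩
        rcases (hmem q).1 hq with rfl | h | h
        · rfl
        · have := m1 q h; omega
        · have := m2 q h; omega
      · rcases Nat.lt_or_ge i z with hlt | hge
        · obtain ⟨p, ⟨hp, hpi⟩, huniq⟩ := hN.tot i hai hlt hiw
          refine ⟨p, ⟨(hmem p).2 (Or.inr (Or.inl hp)), hpi⟩, ?_⟩
          rintro q ⟨hq, hqi⟩
          rcases (hmem q).1 hq with rfl | h | h
          · exfalso; rcases hqi with h' | h' <;> simp_all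
          · exact huniq q ⟨h, hqi⟩
          · have := m2 q h; omega
        · obtain ⟨p, ⟨hp, hpi⟩, huniq⟩ := h2.tot i (by omega) hib
          refine ⟨p, ⟨(hmem p).2 (Or.inr (Or.inr hp)), hpi⟩, ?_⟩
          rintro q ⟨hq, hqi⟩
          rcases (hmem q).1 hq with rfl | h | h
          · exfalso; rcases hqi with h' | h' <;> simp_all <;> omega
          · have := m1 q h; omega
          · exact huniq q ⟨h, hqi⟩
  · intro p hp q hq
    rcases (hmem p).1 hp with rfl | h | h <;> rcases (hmem q).1 hq with rfl | h' | h'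
    · simp
    · have := m1 q h'; simp; omega
    · have := m2 q h'; simp; omega
    · have := m1 p h; have hc := hN.nct p h; simp only [] at *; omega
    · exact hN.ncr p h q h'
    · have := m1 p h; have := m2 q h'; omega
    · have := m2 p h; simp; omega
    · have := m2 p h; have := m1 q h'; omega
    · exact h2.ncr p h q h'
  · intro p hp
    rcases (hmem p).1 hp with rfl | h | h
    · exact hwz
    · exact hN.eqv p h
    · exact h2.eqv p h
  · intro p hp q hq hpq1 hpq2
    rcases (hmem p).1 hp with rfl | h | h <;> rcases (hmem q).1 hq with rfl | h' | h'
    · simp at hpq1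
    · rcases (m1 q h') with ⟨_, _, _⟩
      simp only [] at hpq1 hpq2
      exact hwz ▸ hN.xtr q h' hpq1
    · have := m2 q h'; simp only [] at hpq1 hpq2; omega
    · have := m1 p h; simp only [] at hpq1 hpq2; omega
    · exact hN.nst p h q h' hpq1 hpq2
    · have := m1 p h; have := m2 q h'; omega
    · have := m2 p h; simp only [] at hpq1 hpq2; omega
    · have := m2 p h; have := m1 q h'; omega
    · exact h2.nst p h q h' hpq1 hpq2

example : True := trivial

lemma split_near {x : ℕ → ℝ} {a b z : ℕ} {M : Finset (ℕ × ℕ)}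
    (h : GoodNear x a b z M) :
    Good x a z (M.filter (fun p => p.2 < z)) ∧
      Good x (z+1) b (M.filter (fun p => z < p.1)) := by
  classical
  have dich : ∀ p ∈ M, p.2 < z ∨ z < p.1 := by
    intro p hp
    have hb := h.bnd p hp
    have hn := h.nez p hp
    have hc := h.nct p hp
    omega
  constructor
  · constructor
    · intro p hp
      have hp' := Finset.mem_filter.1 hp
      have := h.bnd p hp'.1; have := hp'.2
      omega
    · intro i hai hiz
      have hib : i < b := by have := h.hzb; omega
      obtain ⟨p, ⟨hp, hpi⟩, huniq⟩ := h.tot i hai hib (by omega)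
      have hpin : p.2 < z := by
        have := h.bnd p hp
        rcases dich p hp with h' | h'
        · exact h'
        · omega
      refine ⟨p, ⟨Finset.mem_filter.2 ⟨hp, hpin⟩, hpi⟩, ?_⟩
      rintro q ⟨hq, hqi⟩
      exact huniq q ⟨(Finset.mem_filter.1 hq).1, hqi⟩
    · intro p hp q hq
      exact h.ncr p (Finset.mem_filter.1 hp).1 q (Finset.mem_filter.1 hq).1
    · intro p hp
      exact h.eqv p (Finset.mem_filter.1 hp).1
    · intro p hp q hq
      exact h.nst p (Finset.mem_filter.1 hp).1 q (Finset.mem_filter.1 hq).1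
  · constructor
    · intro p hp
      have hp' := Finset.mem_filter.1 hp
      have := h.bnd p hp'.1; have := hp'.2
      omega
    · intro i hai hib
      obtain ⟨p, ⟨hp, hpi⟩, huniq⟩ := h.tot i (by have := h.haz; omega) hib (by omega)
      have hpin : z < p.1 := by
        have := h.bnd p hp
        rcases dich p hp with h' | h'
        · omega
        · exact h'
      refine ⟨p, ⟨Finset.mem_filter.2 ⟨hp, hpin⟩, hpi⟩, ?_⟩
      rintro q ⟨hq, hqi⟩
      exact huniq q ⟨(Finset.mem_filter.1 hq).1, hqi⟩
    · intro p hp q hq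
      exact h.ncr p (Finset.mem_filter.1 hp).1 q (Finset.mem_filter.1 hq).1
    · intro p hp
      exact h.eqv p (Finset.mem_filter.1 hp).1
    · intro p hp q hq
      exact h.nst p (Finset.mem_filter.1 hp).1 q (Finset.mem_filter.1 hq).1

lemma split_full {x : ℕ → ℝ} {a b z : ℕ} {M : Finset (ℕ × ℕ)}
    (hG : Good x a b M) (haz : a ≤ z) (hzb : z < b)
    (hmin : ∀ i, a ≤ i → i < b → x z ≤ x i)
    (hrt : ∀ i, z < i → i < b → x z < x i) :
    ∃ p0 ∈ M, p0.2 = z ∧ x p0.1 = x z ∧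
      GoodNear x a z p0.1 (M.filter (fun p => p.2 < z)) ∧
      Good x (z+1) b (M.filter (fun p => z < p.1)) := by
  classical
  obtain ⟨p0, ⟨hp0, hp0i⟩, huniq0⟩ := hG.tot z haz hzb
  have hb0 := hG.bnd p0 hp0
  have heq0 := hG.eqv p0 hp0
  have hp02 : p0.2 = z := by
    rcases hp0i with h' | h'
    · exfalso
      have : x z < x p0.2 := hrt p0.2 (by omega) (by omega)
      rw [← h', heq0] at this
      exact lt_irrefl _ this
    · exact h'
  set w := p0.1 with hwdef
  have hwz : w < z := by omega
  have hxw : x w = x z := by rw [heq0, hp02]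
  -- dichotomy
  have dich : ∀ q ∈ M, q.2 < z ∨ z < q.1 ∨ q = p0 := by
    intro q hq
    have hbq := hG.bnd q hq
    by_cases hq1 : q.1 = z
    · right; right; exact huniq0 q ⟨hq, Or.inl hq1⟩
    by_cases hq2 : q.2 = z
    · right; right; exact huniq0 q ⟨hq, Or.inr hq2⟩
    rcases Nat.lt_or_ge q.2 z with h' | h'
    · exact Or.inl h'
    rcases Nat.lt_or_ge z q.1 with h'' | h''
    · exact Or.inr (Or.inl h'')
    -- now q.1 < z < q.2
    have hq1z : q.1 < z := by omega
    have hq2z : z < q.2 := by omega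
    exfalso
    rcases Nat.lt_trichotomy q.1 w with hlt | heq | hgt
    · have := hG.nst q hq p0 hp0 (by omega) (by omega)
      have h2 := hmin q.1 (by omega) (by omega)
      rw [hxw] at this
      linarith
    · obtain ⟨u, hu, huu⟩ := hG.tot w (by omega) (by omega)
      have e1 : q = u := huu q ⟨hq, Or.inl heq⟩
      have e2 : p0 = u := huu p0 ⟨hp0, Or.inl rfl⟩
      rw [e1, ← e2] at hq2z
      omega
    · exact hG.ncr p0 hp0 q hq (by omega)
  have hmemf : ∀ q, q ∈ M.filter (fun p => p.2 < z) ↔ q ∈ M ∧ q.2 < z := by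
    intro q; exact Finset.mem_filter
  refine ⟨p0, hp0, hp02, hxw, ?_, ?_⟩
  · constructor
    · exact hb0.1
    · exact hwz
    · intro i hai hiz
      rw [hxw]; exact hmin i hai (by omega)
    · intro p hp
      have hp' := (hmemf p).1 hp
      have := hG.bnd p hp'.1
      exact ⟨this.1, this.2.1, hp'.2⟩
    · intro p hp
      have hp' := (hmemf p).1 hp
      have hbp := hG.bnd p hp'.1
      obtain ⟨u, hu, huu⟩ := hG.tot w (by omega) (by omega)
      have e2 : p0 = u := huu p0 ⟨hp0, Or.inl rfl⟩
      constructor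
      · intro hc
        have e1 : p = u := huu p ⟨hp'.1, Or.inl hc⟩
        rw [e1, ← e2] at hp'
        omega
      · intro hc
        have e1 : p = u := huu p ⟨hp'.1, Or.inr hc⟩
        rw [e1, ← e2] at hp'
        omega
    · intro i hai hiz hiw
      obtain ⟨p, ⟨hp, hpi⟩, huniq⟩ := hG.tot i hai (by omega)
      have hpne : p ≠ p0 := by
        intro hc
        subst hc
        rcases hpi with h' | h' <;> omega
      have hpin : p.2 < z := by
        have hbp := hG.bnd p hp
        rcases dich p hp with h' | h' | h'
        · exact h'
        · rcases hpi with h'' | h'' <;> omega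
        · exact absurd h' hpne
      refine ⟨p, ⟨(hmemf p).2 ⟨hp, hpin⟩, hpi⟩, ?_⟩
      rintro q ⟨hq, hqi⟩
      exact huniq q ⟨((hmemf q).1 hq).1, hqi⟩
    · intro p hp q hq
      exact hG.ncr p ((hmemf p).1 hp).1 q ((hmemf q).1 hq).1
    · intro p hp
      exact hG.eqv p ((hmemf p).1 hp).1
    · intro p hp q hq
      exact hG.nst p ((hmemf p).1 hp).1 q ((hmemf q).1 hq).1
    · intro p hp hc
      have hp' := (hmemf p).1 hp
      exact hG.ncr p hp'.1 p0 hp0 (by omega)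
    · intro p hp hwp
      have hp' := (hmemf p).1 hp
      exact hG.nst p0 hp0 p hp'.1 (by omega) (by omega)
  · constructor
    · intro p hp
      have hp' := Finset.mem_filter.1 hp
      have := hG.bnd p hp'.1
      exact ⟨by omega, this.2.1, this.2.2⟩
    · intro i hai hib
      obtain ⟨p, ⟨hp, hpi⟩, huniq⟩ := hG.tot i (by omega) hib
      have hpne : p ≠ p0 := by
        intro hc
        subst hc
        rcases hpi with h' | h' <;> omega
      have hpin : z < p.1 := by
        have hbp := hG.bnd p hp
        rcases dich p hp with h' | h' | h'
        · rcases hpi with h'' | h'' <;> omega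
        · exact h'
        · exact absurd h' hpne
      refine ⟨p, ⟨Finset.mem_filter.2 ⟨hp, hpin⟩, hpi⟩, ?_⟩
      rintro q ⟨hq, hqi⟩
      exact huniq q ⟨(Finset.mem_filter.1 hq).1, hqi⟩
    · intro p hp q hq
      exact hG.ncr p (Finset.mem_filter.1 hp).1 q (Finset.mem_filter.1 hq).1
    · intro p hp
      exact hG.eqv p (Finset.mem_filter.1 hp).1
    · intro p hp q hq
      exact hG.nst p (Finset.mem_filter.1 hp).1 q (Finset.mem_filter.1 hq).1

example : True := trivial

lemma Gfun_empty (x : ℕ → ℝ) (a : ℕ) : Gfun x a a = 0 := by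
  unfold Gfun; simp

lemma Good_empty (x : ℕ → ℝ) (a : ℕ) : Good x a a ∅ := by
  constructor
  · intro p hp; simp at hp
  · intro i h1 h2; omega
  · intro p hp; simp at hp
  · intro p hp; simp at hp
  · intro p hp; simp at hp

lemma main_lemma : ∀ L : ℕ, ∀ a : ℕ, ∀ x : ℕ → ℝ,
    (∀ i, a ≤ i → i < a + L → 0 < x i) →
    (0 ≤ Gfun x a (a + L))
    ∧ (Even L → (Gfun x a (a + L) = 0 ↔ ∃ M, Good x a (a + L) M))
    ∧ (¬ Even L → wmin x a (a + L - 1) ≤ Gfun x a (a + L)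
        ∧ (Gfun x a (a + L) = wmin x a (a + L - 1) ↔
            ∃ z M, GoodNear x a (a + L) z M)) := by
  intro L
  induction L using Nat.strong_induction_on with
  | _ L IH =>
  intro a x hx
  by_cases hL0 : L = 0
  · subst hL0
    simp only [Nat.add_zero]
    refine ⟨le_of_eq (Gfun_empty x a).symm, fun _ => ?_, fun h => absurd Even.zero h⟩
    constructor
    · intro _; exact ⟨∅, Good_empty x a⟩
    · intro _; exact Gfun_empty x a
  -- L ≥ 1
  have hL1 : 1 ≤ L := by omega
  set b := a + L with hb
  have hab : a < b := by omega
  have hab1 : a ≤ b - 1 := by omega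
  classical
  -- rightmost minimum position z
  obtain ⟨i0, hi0a, hi0b, hi0⟩ := wmin_exists x hab1
  have hSne : ((Finset.Icc a (b-1)).filter (fun i => x i = wmin x a (b-1))).Nonempty :=
    ⟨i0, by simp only [Finset.mem_filter, Finset.mem_Icc]; exact ⟨⟨hi0a, hi0b⟩, hi0⟩⟩
  obtain ⟨z, hzmem, hzmax⟩ : ∃ z ∈ (Finset.Icc a (b-1)).filter (fun i => x i = wmin x a (b-1)),
      ∀ i ∈ (Finset.Icc a (b-1)).filter (fun i => x i = wmin x a (b-1)), i ≤ z :=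
    ⟨_, Finset.max'_mem _ hSne, fun i hi => Finset.le_max' _ i hi⟩
  have hzmem' := Finset.mem_filter.1 hzmem
  have haz : a ≤ z := (Finset.mem_Icc.1 hzmem'.1).1
  have hzb : z < b := by have := (Finset.mem_Icc.1 hzmem'.1).2; omega
  have hxz : x z = wmin x a (b - 1) := hzmem'.2
  have hmin : ∀ i, a ≤ i → i < b → x z ≤ x i := by
    intro i h1 h2
    rw [hxz]
    exact wmin_le x h1 (by omega)
  have hrt : ∀ i, z < i → i < b → x z < x i := by
    intro i h1 h2
    rcases eq_or_lt_of_le (hmin i (by omega) h2) with h' | h'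
    · exfalso
      have hiS : i ∈ (Finset.Icc a (b-1)).filter (fun i => x i = wmin x a (b-1)) :=
        Finset.mem_filter.2 ⟨Finset.mem_Icc.2 ⟨by omega, by omega⟩, by rw [← h', hxz]⟩
      have := hzmax i hiS
      omega
    · exact h'
  have hz_pos : 0 < x z := hx z haz hzb
  have hsplit := Gfun_split x haz hzb hmin
  -- packaged induction hypothesis
  have IHfull : ∀ c d : ℕ, c ≤ d → d - c < L → c ≥ a → d ≤ b →
      (0 ≤ Gfun x c d)
      ∧ (Even (d - c) → (Gfun x c d = 0 ↔ ∃ M, Good x c d M))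
      ∧ (¬ Even (d - c) → wmin x c (d - 1) ≤ Gfun x c d
          ∧ (Gfun x c d = wmin x c (d-1) ↔ ∃ z' M, GoodNear x c d z' M)) := by
    intro c d hcd hlt hca hdb
    have h := IH (d - c) hlt c x (by intro i h1 h2; exact hx i (by omega) (by omega))
    have e : c + (d - c) = d := by omega
    rw [e] at h
    exact h
  -- parity bookkeeping
  have hK : Kfun a b - Kfun a z - Kfun (z+1) b
      = (if Even (b - a) then 0 else 1) - (if Even (z - a) then 0 else 1)
        - (if Even (b - (z+1)) then 0 else 1) := by
    congr 1
    congr 1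
    · by_cases h : Even (b - a)
      · rw [Kfun_even (le_of_lt hab) h, if_pos h]
      · rw [Kfun_odd (le_of_lt hab) h, if_neg h]
    · by_cases h : Even (z - a)
      · rw [Kfun_even haz h, if_pos h]
      · rw [Kfun_odd haz h, if_neg h]
    · by_cases h : Even (b - (z+1))
      · rw [Kfun_even (by omega) h, if_pos h]
      · rw [Kfun_odd (by omega) h, if_neg h]
  obtain ⟨IH1i, IH1e, IH1o⟩ := IHfull a z haz (by omega) le_rfl (by omega)
  obtain ⟨IH2i, IH2e, IH2o⟩ := IHfull (z+1) b (by omega) (by omega) (by omega) le_rfl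
  -- reverse helpers
  have hrev_even : (∃ M, Good x a b M) → Gfun x a b = 0 := by
    rintro ⟨M, hM⟩
    obtain ⟨p0, hp0, hp02, hx0, hN1, hG2⟩ := split_full hM haz hzb hmin hrt
    have hodd1 : ¬ Even (z - a) := by
      have := hN1.odd
      rw [Nat.even_iff]; omega
    have heven2 : Even (b - (z+1)) := by
      have := hG2.even
      rw [Nat.even_iff]; omega
    have hGr : Gfun x (z+1) b = 0 := ((IH2e heven2).2) ⟨_, hG2⟩
    have hGl : Gfun x a z = x z := by
      have hwm : wmin x a (z - 1) = x p0.1 := by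
        apply wmin_eq_of x hN1.haz (by have := hN1.hzb; omega)
        intro i h1 h2
        exact hN1.hmin i h1 (by have := hN1.hzb; omega)
      have := ((IH1o hodd1).2).2 ⟨p0.1, _, hN1⟩
      rw [this, hwm, hx0]
    have hevenL : Even (b - a) := by
      have := hN1.odd; have := hG2.even
      rw [Nat.even_iff]; omega
    rw [hsplit, hK, if_pos hevenL, if_neg hodd1, if_pos heven2, hGl, hGr]
    ring
  have hrev_odd : (∃ z' M, GoodNear x a b z' M) → Gfun x a b = wmin x a (b - 1) := by
    rintro ⟨z0, M, hM⟩
    have haz0 : a ≤ z0 := hM.haz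
    have hz0b : z0 < b := hM.hzb
    obtain ⟨hG1, hG2⟩ := split_near hM
    have he1 : Even (z0 - a) := by
      have := hG1.even; rw [Nat.even_iff]; omega
    have he2 : Even (b - (z0+1)) := by
      have := hG2.even; rw [Nat.even_iff]; omega
    have hoddL : ¬ Even (b - a) := by
      have := hG1.even; have := hG2.even
      rw [Nat.even_iff]; omega
    obtain ⟨J1i, J1e, J1o⟩ := IHfull a z0 haz0 (by omega) le_rfl (by omega)
    obtain ⟨J2i, J2e, J2o⟩ := IHfull (z0+1) b (by omega) (by omega) (by omega) le_rfl
    have hGl : Gfun x a z0 = 0 := (J1e he1).2 ⟨_, hG1⟩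
    have hGr : Gfun x (z0+1) b = 0 := (J2e he2).2 ⟨_, hG2⟩
    have hmin0 : ∀ i, a ≤ i → i < b → x z0 ≤ x i := hM.hmin
    have hsplit0 := Gfun_split x haz0 hz0b hmin0
    have hwm0 : wmin x a (b - 1) = x z0 :=
      wmin_eq_of x haz0 (by omega) (fun i h1 h2 => hmin0 i h1 (by omega))
    have hK0 : Kfun a b - Kfun a z0 - Kfun (z0+1) b = 1 := by
      rw [Kfun_odd (le_of_lt hab) hoddL, Kfun_even haz0 he1, Kfun_even (by omega) he2]
      ring
    rw [hsplit0, hK0, hGl, hGr, hwm0]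
    ring
  -- main case analysis
  by_cases hLpar : Even (b - a)
  · -- L even
    have hLpar' : Even L := by rwa [show b - a = L by omega] at hLpar
    by_cases h1par : Even (z - a)
    · -- left even, right odd: G > 0
      have h2par : ¬ Even (b - (z+1)) := by
        rw [Nat.even_iff] at *; omega
      obtain ⟨hmr, _⟩ := IH2o h2par
      have hz1b1 : z + 1 ≤ b - 1 := by
        rw [Nat.even_iff] at h2par; omega
      obtain ⟨j, hj1, hj2, hj3⟩ := wmin_exists x hz1b1
      have hmrgt : x z < wmin x (z+1) (b-1) := by
        rw [← hj3]; exact hrt j (by omega) (by omega)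
      have hGpos : 0 < Gfun x a b := by
        rw [hsplit, hK, if_pos hLpar, if_pos h1par, if_neg h2par]
        have := IH1i
        linarith
      refine ⟨le_of_lt hGpos, fun _ => ⟨fun h => absurd h (by linarith), hrev_even⟩,
        fun h => absurd hLpar' h⟩
    · -- left odd, right even
      have h2par : Even (b - (z+1)) := by
        rw [Nat.even_iff] at *; omega
      obtain ⟨hml, hiff1⟩ := IH1o h1par
      have hmlge : x z ≤ wmin x a (z - 1) := by
        apply le_wmin x (by rw [Nat.even_iff] at h1par; omega)
        intro i h1 h2
        exact hmin i h1 (by omega)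
      have hGsplit : Gfun x a b = Gfun x a z + Gfun x (z+1) b - x z := by
        rw [hsplit, hK, if_pos hLpar, if_neg h1par, if_pos h2par]
        ring
      have hGge : 0 ≤ Gfun x a b := by
        rw [hGsplit]
        have := IH2i
        linarith
      refine ⟨hGge, fun _ => ⟨?_, hrev_even⟩, fun h => absurd hLpar' h⟩
      intro hG0
      have hGr0 : Gfun x (z+1) b = 0 := by
        have h1 : x z ≤ Gfun x a z := le_trans hmlge hml
        have := IH2i
        linarith [hGsplit ▸ hG0]
      have hGl : Gfun x a z = x z := by
        have h1 : x z ≤ Gfun x a z := le_trans hmlge hml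
        have := IH2i
        linarith [hGsplit ▸ hG0]
      have hGlm : Gfun x a z = wmin x a (z - 1) := by
        have h4 : wmin x a (z - 1) ≤ x z := by rw [← hGl]; exact hml
        rw [hGl]
        linarith
      obtain ⟨w, M1, hN1⟩ := hiff1.1 hGlm
      obtain ⟨M2, hG2⟩ := (IH2e h2par).1 hGr0
      have hxwz : x w = x z := by
        have h1 : x z ≤ x w := hmin w hN1.haz (by have := hN1.hzb; omega)
        have h2 : x w ≤ wmin x a (z-1) := by
          apply le_wmin x (by rw [Nat.even_iff] at h1par; omega)
          intro i hi1 hi2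
          exact hN1.hmin i hi1 (by have := hN1.hzb; omega)
        have h3 : wmin x a (z-1) ≤ x z := le_of_eq (hGlm.symm.trans hGl)
        linarith
      exact ⟨_, combine_full hzb hN1 hG2 hxwz⟩
  · -- L odd
    have hLpar' : ¬ Even L := by rwa [show b - a = L by omega] at hLpar
    have hwmb : wmin x a (a + L - 1) = x z := by
      have e : a + L - 1 = b - 1 := by omega
      rw [e, ← hxz]
    by_cases h1par : Even (z - a)
    · -- both even
      have h2par : Even (b - (z+1)) := by
        rw [Nat.even_iff] at *; omega
      have hGsplit : Gfun x a b = Gfun x a z + Gfun x (z+1) b + x z := by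
        rw [hsplit, hK, if_neg hLpar, if_pos h1par, if_pos h2par]
        ring
      refine ⟨by rw [hGsplit]; have := IH1i; have := IH2i; linarith,
        fun h => absurd h hLpar', fun _ => ⟨?_, ?_, hrev_odd⟩⟩
      · rw [hwmb, hGsplit]
        have := IH1i; have := IH2i; linarith
      · intro hGm
        rw [hwmb] at hGm
        have hGl : Gfun x a z = 0 := by
          have := IH1i; have := IH2i
          rw [hGsplit] at hGm
          linarith
        have hGr : Gfun x (z+1) b = 0 := by
          have := IH1i; have := IH2i
          rw [hGsplit] at hGm
          linarith
        obtain ⟨M1, hG1⟩ := (IH1e h1par).1 hGl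
        obtain ⟨M2, hG2⟩ := (IH2e h2par).1 hGr
        exact ⟨z, _, combine_near haz hzb hG1 hG2 hmin hrt⟩
    · -- both odd: G > m
      have h2par : ¬ Even (b - (z+1)) := by
        rw [Nat.even_iff] at *; omega
      obtain ⟨hml, _⟩ := IH1o h1par
      obtain ⟨hmr, _⟩ := IH2o h2par
      have hmlge : x z ≤ wmin x a (z - 1) := by
        apply le_wmin x (by rw [Nat.even_iff] at h1par; omega)
        intro i h1 h2
        exact hmin i h1 (by omega)
      have hz1b1 : z + 1 ≤ b - 1 := by
        rw [Nat.even_iff] at h2par; omega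
      obtain ⟨j, hj1, hj2, hj3⟩ := wmin_exists x hz1b1
      have hmrgt : x z < wmin x (z+1) (b-1) := by
        rw [← hj3]; exact hrt j (by omega) (by omega)
      have hGgt : x z < Gfun x a b := by
        rw [hsplit, hK, if_neg hLpar, if_neg h1par, if_neg h2par]
        linarith
      refine ⟨by linarith, fun h => absurd h hLpar', fun _ => ⟨?_, ?_, hrev_odd⟩⟩
      · rw [hwmb]; linarith
      · intro hGm
        rw [hwmb] at hGm
        linarith

example : True := trivial

/-- For even `n`, `H(x) = 0` iff there is a non-crossing chord diagram `C` on the `n - 2`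
points (points `3, …, n` of the paper correspond to indices `0, …, n-3` here) such that
(i) `x_{a} = x_{b}` for every chord `{a,b}` of `C`, and (ii) whenever a chord `{a,b}`
surrounds another chord `{c,d}` (i.e. `a < c < d < b`), then `x_a = x_b < x_c = x_d`. -/
theorem Hfun_eq_zero_iff_ncChordDiagram (n : ℕ) (hn : 4 ≤ n) (he : Even n) (x : ℕ → ℝ) :
    Hfun (n - 2) x = 0 ↔
      ∃ M : Finset (ℕ × ℕ), IsNCMatchingN (n - 2) M ∧
        (∀ p ∈ M, x p.1 = x p.2) ∧
        (∀ p ∈ M, ∀ q ∈ M, p.1 < q.1 → q.2 < p.2 → x p.1 < x q.1) := by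
  set N := n - 2 with hNdef
  have hN2 : 2 ≤ N := by omega
  have hNe : Even N := by
    rw [Nat.even_iff] at he ⊢
    omega
  set c := 1 - wmin x 0 (N - 1) with hc
  set y : ℕ → ℝ := fun i => x i + c with hy
  have hypos : ∀ i, 0 ≤ i → i < 0 + N → 0 < y i := by
    intro i _ hiN
    have h1 : wmin x 0 (N - 1) ≤ x i := wmin_le x (Nat.zero_le i) (by omega)
    simp only [hy, hc]
    linarith
  have hshift : Gfun y 0 N = Gfun x 0 N := by
    rw [hy, Gfun_shift x c 0 N, Kfun_even (Nat.zero_le N) (by simpa using hNe), mul_zero,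
      add_zero]
  have hHG : Hfun N x = Gfun x 0 N := by
    unfold Hfun Gfun
    rw [Finset.range_eq_Ico]
  have hmain := (main_lemma N 0 y hypos).2.1 hNe
  simp only [Nat.zero_add] at hmain
  rw [hHG, ← hshift]
  constructor
  · intro h
    obtain ⟨M, hM⟩ := hmain.1 h
    refine ⟨M, ⟨fun p hp => ⟨(hM.bnd p hp).2.1, (hM.bnd p hp).2.2⟩,
      fun i hi => hM.tot i (Nat.zero_le i) hi, hM.ncr⟩, ?_, ?_⟩
    · intro p hp
      have := hM.eqv p hp
      simp only [hy] at this
      linarith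
    · intro p hp q hq h1 h2
      have := hM.nst p hp q hq h1 h2
      simp only [hy] at this
      linarith
  · rintro ⟨M, ⟨h1, h2, h3⟩, h4, h5⟩
    apply hmain.2
    refine ⟨M, ?_⟩
    constructor
    · exact fun p hp => ⟨Nat.zero_le _, h1 p hp⟩
    · exact fun i _ hi => h2 i hi
    · exact h3
    · intro p hp
      simp only [hy]
      rw [h4 p hp]
    · intro p hp q hq hc1 hc2
      simp only [hy]
      have := h5 p hp q hq hc1 hc2
      linarith
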